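/- Let K be a commutative semiring, Σ a finite set, D = (S, Σ, α, δ, Ω_D, K) a deterministic automaton with outputs in K, and 𝒜 = (M, KΣ*, s_𝒜, t, Ω_𝒜) a K-linear automaton over the free K-algebra KΣ*. Then restriction to basis vectors, φ ↦ (s ↦ φ(e_s)), is a bijection between the set of K-linear automaton morphisms from the free K-linear automaton F(D) to 𝒜 and the set of deterministic automaton morphisms from D to the determinization U(𝒜); its inverse sends f : S → M to its unique K-linear extension K^(S) → M. (This bijection is the adjunction between the category of deterministic automata and the category of K-linear automata.) -/

import Mathlib

/-- Let `K` be a commutative semiring, `Σ` a finite set,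
`D = (S, Σ, α, δ, Ω_D, K)` a deterministic automaton with outputs in `K`, and
`𝒜 = (M, KΣ*, s_𝒜, t, Ω_𝒜)` a `K`-linear automaton over the free `K`-algebra `KΣ*` with
action generated by the endomorphisms `t x`.  Restriction to basis vectors,
`φ ↦ (s ↦ φ (e_s))`, is a bijection between the `K`-linear automaton morphisms from the free
`K`-linear automaton `F(D)` (state semimodule `S →₀ K`, action generated by
`T x = lmapDomain (δ x)`, start `e_α`, observation the linear extension of `Ω_D`) to `𝒜`, and
the deterministic automaton morphisms from `D` to the determinization `U(𝒜)`; the inverse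
sends `f : S → M` to its unique `K`-linear extension `linearCombination K f`.  (This bijection
is the adjunction between deterministic automata and `K`-linear automata.) -/
theorem automaton_adjunction {K : Type*} [CommSemiring K]
    {σ : Type*} [Fintype σ] {S M : Type*} [AddCommMonoid M] [Module K M]
    (α : S) (δ : σ → S → S) (ΩD : S → K)
    (t : σ → Module.End K M) (sA : M) (ΩA : M →ₗ[K] K) :
    ∃ e : {φ : (S →₀ K) →ₗ[K] M //
            φ (Finsupp.single α 1) = sA ∧
            (∀ (x : σ) (m : S →₀ K), φ (Finsupp.lmapDomain K K (δ x) m) = t x (φ m)) ∧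
            (∀ m : S →₀ K, ΩA (φ m) = Finsupp.linearCombination K ΩD m)} ≃
          {f : S → M //
            f α = sA ∧
            (∀ (x : σ) (s : S), f (δ x s) = t x (f s)) ∧
            (∀ s : S, ΩA (f s) = ΩD s)},
      (∀ φ, (e φ : S → M) = fun s => (φ : (S →₀ K) →ₗ[K] M) (Finsupp.single s 1)) ∧
      (∀ f, (e.symm f : (S →₀ K) →ₗ[K] M) = Finsupp.linearCombination K (f : S → M)) := by
  refine ⟨{
    toFun := fun φ => ⟨fun s => (φ : (S →₀ K) →ₗ[K] M) (Finsupp.single s 1), ?_, ?_, ?_⟩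
    invFun := fun f => ⟨Finsupp.linearCombination K (f : S → M), ?_, ?_, ?_⟩
    left_inv := ?_
    right_inv := ?_ }, fun φ => rfl, fun f => rfl⟩
  · exact φ.2.1
  · intro x s
    have := φ.2.2.1 x (Finsupp.single s 1)
    simpa [Finsupp.lmapDomain_apply, Finsupp.mapDomain_single] using this
  · intro s
    have := φ.2.2.2 (Finsupp.single s 1)
    simpa using this
  · simpa using f.2.1
  · intro x m
    induction m using Finsupp.induction_linear with
    | zero => simp
    | add a b ha hb => simp only [map_add, ha, hb]
    | single s k =>
        simp [Finsupp.lmapDomain_apply, Finsupp.mapDomain_single, f.2.2.1 x s]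
  · intro m
    induction m using Finsupp.induction_linear with
    | zero => simp
    | add a b ha hb => simp only [map_add, ha, hb]
    | single s k => simp [f.2.2.2 s]
  · intro φ
    ext m
    simp
  · intro f
    ext s
    simp
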